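/- Let k₀ ∈ L²([0,1]²) be a real stochastic kernel and L₀ the associated integral operator on L²([0,1];ℂ); assume L₀ satisfies the mixing condition (A1) (‖L₀ⁿ g‖₂ → 0 for every g ∈ L²([0,1];ℂ) with ∫ g dm = 0). Let λ₀ ∈ ℂ and e, ê ∈ L²([0,1];ℂ) satisfy L₀ e = λ₀ e and L₀ᵀ ê = λ₀ ê, where L₀ᵀ is the integral operator with kernel (x,y) ↦ k₀(y,x). Define E(x,y) := (Re ê(x)·Re e(y) + Im ê(x)·Im e(y))·Re λ₀ + (Im ê(x)·Re e(y) − Re ê(x)·Im e(y))·Im λ₀. Fix 0 < l < 1 and assume there exists Ξ' ⊆ Ξ(F_l) with m(Ξ') > 0 such that ∫_{F_l^y} E⁺(x,y) dx > 0 and ∫_{F_l^y} E⁻(x,y) dx > 0 for every y ∈ Ξ'. Define M(x,y) := 𝟙_{F_l}(x,y) · ( (1/m(F_l^y)) ∫_{F_l^y} E(z,y) dz − E(x,y) ) and α := ‖M‖_{L²([0,1]²)}. Then α > 0, k̇ := M/α belongs to V_ker ∩ S_{k₀,l} with ‖k̇‖_{L²([0,1]²)} = 1, and k̇ is the unique minimizer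 of the functional k ↦ ∫₀¹∫₀¹ k(x,y) E(x,y) dx dy over the set {k ∈ V_ker ∩ S_{k₀,l} : ‖k‖_{L²([0,1]²)} = 1}. -/

import Mathlib

open MeasureTheory
open scoped ENNReal NNReal

/-- Lebesgue measure restricted to the unit interval `[0,1]`. -/
noncomputable def μ01 : Measure ℝ := volume.restrict (Set.Icc (0 : ℝ) 1)

/-- Two-dimensional Lebesgue measure restricted to the unit square `[0,1]²`. -/
noncomputable def ν01 : Measure (ℝ × ℝ) := μ01.prod μ01

/-- The region `F_l ⊆ [0,1]²` where the kernel `k₀` is at least `l`. -/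
def Fset (k₀ : ℝ × ℝ → ℝ) (l : ℝ) : Set (ℝ × ℝ) :=
  {p | p ∈ Set.Icc (0 : ℝ) 1 ×ˢ Set.Icc (0 : ℝ) 1 ∧ l ≤ k₀ p}

/-- The `y`-section `F_l^y = {x ∈ [0,1] : (x,y) ∈ F_l}`. -/
def Fsec (k₀ : ℝ × ℝ → ℝ) (l : ℝ) (y : ℝ) : Set ℝ :=
  {x | (x, y) ∈ Fset k₀ l}

/-- `Ξ(F_l)`: the set of `y ∈ [0,1]` whose section `F_l^y` has positive measure. -/
def XiF (k₀ : ℝ × ℝ → ℝ) (l : ℝ) : Set ℝ :=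
  {y | y ∈ Set.Icc (0 : ℝ) 1 ∧ 0 < μ01 (Fsec k₀ l y)}

/-- The function
`E(x,y) = (Re ê(x) Re e(y) + Im ê(x) Im e(y)) Re λ₀ + (Im ê(x) Re e(y) − Re ê(x) Im e(y)) Im λ₀`. -/
def Efun (lam : ℂ) (e ehat : ℝ → ℂ) : ℝ × ℝ → ℝ := fun p =>
  ((ehat p.1).re * (e p.2).re + (ehat p.1).im * (e p.2).im) * lam.re +
  ((ehat p.1).im * (e p.2).re - (ehat p.1).re * (e p.2).im) * lam.im

/-- The (un-normalized) optimal kernel perturbation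
`M(x,y) = 𝟙_{F_l}(x,y) ((1/m(F_l^y)) ∫_{F_l^y} E(z,y) dz − E(x,y))`. -/
noncomputable def MoptE (k₀ : ℝ × ℝ → ℝ) (l : ℝ) (E : ℝ × ℝ → ℝ) : ℝ × ℝ → ℝ :=
  (Fset k₀ l).indicator fun p =>
    (∫ z in Fsec k₀ l p.2, E (z, p.2) ∂μ01) / (μ01 (Fsec k₀ l p.2)).toReal - E p

/-- The feasible set `{k ∈ V_ker ∩ S_{k₀,l} : ‖k‖₂ = 1}`. -/
def feasSet (k₀ : ℝ × ℝ → ℝ) (l : ℝ) : Set (Lp ℝ 2 ν01) :=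
  {k : Lp ℝ 2 ν01 |
    (∀ᵐ y ∂μ01, ∫ x, k (x, y) ∂μ01 = 0) ∧
    (∀ᵐ p ∂ν01, p ∉ Fset k₀ l → k p = 0) ∧ ‖k‖ = 1}

/-- The objective `k ↦ ∫∫ k(x,y) E(x,y) dx dy`. -/
noncomputable def JobjE (E : ℝ × ℝ → ℝ) (k : Lp ℝ 2 ν01) : ℝ :=
  ∫ y, (∫ x, k (x, y) * E (x, y) ∂μ01) ∂μ01

instance : IsProbabilityMeasure μ01 := by
  constructor
  rw [μ01, Measure.restrict_apply_univ, Real.volume_Icc]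
  norm_num

instance : IsProbabilityMeasure ν01 := by
  rw [ν01]; infer_instance

lemma ae_ae_symm01 {P : ℝ × ℝ → Prop} (h : ∀ᵐ p ∂ν01, P p) :
    ∀ᵐ y ∂μ01, ∀ᵐ x ∂μ01, P (x, y) :=
  Measure.ae_ae_of_ae_prod
    ((Measure.measurePreserving_swap (μ := μ01) (ν := μ01)).quasiMeasurePreserving.ae h)

lemma ae_snd01 {Q : ℝ → Prop} (h : ∀ᵐ y ∂μ01, Q y) : ∀ᵐ p ∂ν01, Q p.2 :=
  (Measure.quasiMeasurePreserving_snd (μ := μ01) (ν := μ01)).ae h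

lemma memLp_fst_mul_snd {f g : ℝ → ℝ} (hf : MemLp f 2 μ01) (hg : MemLp g 2 μ01) :
    MemLp (fun p : ℝ × ℝ => f p.1 * g p.2) 2 ν01 := by
  obtain ⟨f', hf'sm, hff'⟩ := hf.1
  obtain ⟨g', hg'sm, hgg'⟩ := hg.1
  have hf2 : MemLp f' 2 μ01 := hf.ae_eq hff'
  have hg2 : MemLp g' 2 μ01 := hg.ae_eq hgg'
  have haef : (fun p : ℝ × ℝ => f p.1 * g p.2) =ᵐ[ν01] fun p => f' p.1 * g' p.2 := by
    have h1 : ∀ᵐ p ∂ν01, f p.1 = f' p.1 :=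
      (Measure.quasiMeasurePreserving_fst (μ := μ01) (ν := μ01)).ae hff'
    have h2 : ∀ᵐ p ∂ν01, g p.2 = g' p.2 := ae_snd01 hgg'
    filter_upwards [h1, h2] with p e1 e2
    rw [e1, e2]
  refine MemLp.ae_eq haef.symm ?_
  have hsm : AEStronglyMeasurable (fun p : ℝ × ℝ => f' p.1 * g' p.2) ν01 :=
    ((hf'sm.comp_measurable measurable_fst).mul
      (hg'sm.comp_measurable measurable_snd)).aestronglyMeasurable
  rw [memLp_two_iff_integrable_sq hsm]
  have : Integrable (fun p : ℝ × ℝ => (f' p.1 ^ 2) * (g' p.2 ^ 2)) (μ01.prod μ01) :=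
    Integrable.mul_prod ((memLp_two_iff_integrable_sq hf2.1).1 hf2)
      ((memLp_two_iff_integrable_sq hg2.1).1 hg2)
  refine (this.congr ?_)
  filter_upwards with p
  ring

lemma memLp_indicator_mean (F : Set (ℝ × ℝ)) (hF : MeasurableSet F)
    {Ef : ℝ × ℝ → ℝ} (hEsm : StronglyMeasurable Ef) (hEmem : MemLp Ef 2 ν01)
    (c : ℝ → ℝ)
    (hc : ∀ y, c y = (∫ z in {x | (x, y) ∈ F}, Ef (z, y) ∂μ01) / (μ01 {x | (x, y) ∈ F}).toReal)
    (hcsm : StronglyMeasurable c) :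
    MemLp (F.indicator fun p => c p.2) 2 ν01 := by
  have hsec : ∀ y : ℝ, MeasurableSet {x : ℝ | (x, y) ∈ F} := fun y =>
    hF.preimage (measurable_id.prodMk measurable_const)
  have hindsm : StronglyMeasurable (F.indicator fun p : ℝ × ℝ => c p.2) :=
    (hcsm.comp_measurable measurable_snd).indicator hF
  have hindEsm : StronglyMeasurable (F.indicator Ef) := hEsm.indicator hF
  refine ⟨hindsm.aestronglyMeasurable, ?_⟩
  rw [eLpNorm_eq_lintegral_rpow_enorm_toReal two_ne_zero ENNReal.ofNat_ne_top]
  simp only [enorm_eq_nnnorm]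
  refine ENNReal.rpow_lt_top_of_nonneg (by positivity) ?_
  have htR : (2 : ℝ≥0∞).toReal = (2 : ℝ) := by simp
  rw [htR]
  have hEfin : ∫⁻ p, (‖F.indicator Ef p‖₊ : ℝ≥0∞) ^ (2:ℝ) ∂ν01 ≠ ⊤ := by
    have h1 := (hEmem.indicator hF).eLpNorm_lt_top
    rw [eLpNorm_eq_lintegral_rpow_enorm_toReal two_ne_zero ENNReal.ofNat_ne_top, htR] at h1
    simp only [enorm_eq_nnnorm] at h1
    intro hcon
    rw [hcon] at h1
    simp [ENNReal.top_rpow_of_pos] at h1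
  have hTon1 : ∫⁻ p, (‖(F.indicator fun p : ℝ × ℝ => c p.2) p‖₊ : ℝ≥0∞) ^ (2:ℝ) ∂ν01
      = ∫⁻ y, ∫⁻ x, (‖(F.indicator fun p : ℝ × ℝ => c p.2) (x, y)‖₊ : ℝ≥0∞) ^ (2:ℝ) ∂μ01 ∂μ01 :=
    MeasureTheory.lintegral_prod_symm _ (hindsm.measurable.enorm.pow_const _).aemeasurable
  have hTon2 : ∫⁻ p, (‖F.indicator Ef p‖₊ : ℝ≥0∞) ^ (2:ℝ) ∂ν01
      = ∫⁻ y, ∫⁻ x, (‖F.indicator Ef (x, y)‖₊ : ℝ≥0∞) ^ (2:ℝ) ∂μ01 ∂μ01 :=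
    MeasureTheory.lintegral_prod_symm _ (hindEsm.measurable.enorm.pow_const _).aemeasurable
  rw [hTon1]
  rw [← lt_top_iff_ne_top]
  refine lt_of_le_of_lt (lintegral_mono fun y => ?_) (lt_top_iff_ne_top.2 (hTon2 ▸ hEfin))
  set S : Set ℝ := {x : ℝ | (x, y) ∈ F} with hSdef
  have hrw1 : ∀ x : ℝ, (‖(F.indicator fun p : ℝ × ℝ => c p.2) (x, y)‖₊ : ℝ≥0∞) ^ (2:ℝ)
      = S.indicator (fun _ => (‖c y‖₊ : ℝ≥0∞) ^ (2:ℝ)) x := by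
    intro x
    by_cases hx : (x, y) ∈ F
    · rw [Set.indicator_of_mem hx, Set.indicator_of_mem (show x ∈ S from hx)]
    · rw [Set.indicator_of_notMem hx, Set.indicator_of_notMem (show x ∉ S from hx)]
      simp [ENNReal.zero_rpow_of_pos]
  have hrw2 : ∀ x : ℝ, (‖F.indicator Ef (x, y)‖₊ : ℝ≥0∞) ^ (2:ℝ)
      = S.indicator (fun x => (‖Ef (x, y)‖₊ : ℝ≥0∞) ^ (2:ℝ)) x := by
    intro x
    by_cases hx : (x, y) ∈ F
    · rw [Set.indicator_of_mem hx, Set.indicator_of_mem (show x ∈ S from hx)]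
    · rw [Set.indicator_of_notMem hx, Set.indicator_of_notMem (show x ∉ S from hx)]
      simp [ENNReal.zero_rpow_of_pos]
  simp only [hrw1, hrw2]
  rw [lintegral_indicator (hsec y), lintegral_indicator (hsec y), setLIntegral_const]
  by_cases hS0 : μ01 S = 0
  · rw [hS0, mul_zero]; exact zero_le
  have hStop : μ01 S ≠ ⊤ := measure_ne_top _ _
  set I2 : ℝ≥0∞ := ∫⁻ x in S, (‖Ef (x, y)‖₊ : ℝ≥0∞) ^ (2:ℝ) ∂μ01 with hI2def
  have hCS : ∫⁻ x in S, (‖Ef (x, y)‖₊ : ℝ≥0∞) ∂μ01 ≤ I2 ^ (1/2 : ℝ) * (μ01 S) ^ (1/2 : ℝ) := by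
    have hpq : (2:ℝ).HolderConjugate 2 := Real.HolderConjugate.two_two
    have := ENNReal.lintegral_mul_le_Lp_mul_Lq (μ01.restrict S) hpq
      (f := fun x => (‖Ef (x, y)‖₊ : ℝ≥0∞)) (g := fun _ => 1)
      ((hEsm.measurable.comp (measurable_id.prodMk measurable_const)).enorm).aemeasurable
      aemeasurable_const
    simp only [Pi.mul_apply, mul_one, ENNReal.one_rpow, lintegral_const,
      Measure.restrict_apply_univ, one_mul] at this
    exact this
  have hnum : (‖c y‖₊ : ℝ≥0∞) * μ01 S ≤ I2 ^ (1/2 : ℝ) * (μ01 S) ^ (1/2 : ℝ) := by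
    have htRpos : 0 < (μ01 S).toReal := ENNReal.toReal_pos hS0 hStop
    have hcy : c y * (μ01 S).toReal = ∫ z in S, Ef (z, y) ∂μ01 := by
      rw [hc y, ← hSdef]; field_simp
    have h1 : (‖c y‖₊ : ℝ≥0∞) * μ01 S = (‖∫ z in S, Ef (z, y) ∂μ01‖₊ : ℝ≥0∞) := by
      conv_lhs => rw [← ENNReal.ofReal_toReal hStop]
      rw [← Real.enorm_eq_ofReal ENNReal.toReal_nonneg, enorm_eq_nnnorm, ← ENNReal.coe_mul, ← nnnorm_mul, hcy]
    rw [h1]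
    exact le_trans (enorm_integral_le_lintegral_enorm _) hCS
  have hsq : ((‖c y‖₊ : ℝ≥0∞) * μ01 S) ^ (2:ℝ) ≤ (I2 ^ (1/2 : ℝ) * (μ01 S) ^ (1/2 : ℝ)) ^ (2:ℝ) :=
    ENNReal.rpow_le_rpow hnum (by norm_num)
  have hL : ((‖c y‖₊ : ℝ≥0∞) * μ01 S) ^ (2:ℝ) = (‖c y‖₊ : ℝ≥0∞) ^ (2:ℝ) * ((μ01 S) * μ01 S) := by
    rw [ENNReal.mul_rpow_of_nonneg _ _ (by norm_num)]
    congr 1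
    rw [show (2:ℝ) = ((2:ℕ):ℝ) by norm_num, ENNReal.rpow_natCast]
    ring
  have hR : (I2 ^ (1/2 : ℝ) * (μ01 S) ^ (1/2 : ℝ)) ^ (2:ℝ) = I2 * μ01 S := by
    rw [ENNReal.mul_rpow_of_nonneg _ _ (by norm_num), ← ENNReal.rpow_mul, ← ENNReal.rpow_mul]
    norm_num
  rw [hL, hR] at hsq
  rw [← ENNReal.mul_le_mul_iff_left hS0 hStop]
  calc (‖c y‖₊ : ℝ≥0∞) ^ (2:ℝ) * μ01 S * μ01 S
      = (‖c y‖₊ : ℝ≥0∞) ^ (2:ℝ) * ((μ01 S) * μ01 S) := by ring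
    _ ≤ I2 * μ01 S := hsq

open scoped RealInnerProductSpace

/-- Explicit formula for the unique kernel perturbation maximally
increasing the mixing rate (minimising `∫∫ k E` over the feasible set). -/
theorem optimal_kernel_perturbation_for_mixing
    (k₀ : ℝ × ℝ → ℝ) (hk₀L2 : MemLp k₀ 2 ν01)
    (hk₀nonneg : ∀ᵐ p ∂ν01, 0 ≤ k₀ p)
    (hk₀stoch : ∀ᵐ y ∂μ01, ∫ x, k₀ (x, y) ∂μ01 = 1)
    (L₀ : Lp ℂ 2 μ01 →L[ℂ] Lp ℂ 2 μ01)
    (hL₀ : ∀ f : Lp ℂ 2 μ01, ∀ᵐ x ∂μ01, (L₀ f) x = ∫ y, (k₀ (x, y) : ℂ) * f y ∂μ01)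
    (hmix : ∀ g : Lp ℂ 2 μ01, (∫ x, g x ∂μ01) = 0 →
      Filter.Tendsto (fun n : ℕ => ‖(L₀ ^ n) g‖) Filter.atTop (nhds 0))
    (L₀t : Lp ℂ 2 μ01 →L[ℂ] Lp ℂ 2 μ01)
    (hL₀t : ∀ f : Lp ℂ 2 μ01, ∀ᵐ x ∂μ01, (L₀t f) x = ∫ y, (k₀ (y, x) : ℂ) * f y ∂μ01)
    (lam : ℂ) (e ehat : Lp ℂ 2 μ01)
    (he : L₀ e = lam • e) (hehat : L₀t ehat = lam • ehat)
    (l : ℝ) (hl0 : 0 < l) (hl1 : l < 1)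
    (Ξ' : Set ℝ) (hΞ'sub : Ξ' ⊆ XiF k₀ l) (hΞ'pos : 0 < volume Ξ')
    (hEpos : ∀ y ∈ Ξ',
      0 < ∫ x in Fsec k₀ l y, max (Efun lam (⇑e) (⇑ehat) (x, y)) 0 ∂μ01)
    (hEneg : ∀ y ∈ Ξ',
      0 < ∫ x in Fsec k₀ l y, max (-(Efun lam (⇑e) (⇑ehat) (x, y))) 0 ∂μ01) :
    0 < (eLpNorm (MoptE k₀ l (Efun lam (⇑e) (⇑ehat))) 2 ν01).toReal ∧
    ∃ kdot : Lp ℝ 2 ν01,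
      (∀ᵐ p ∂ν01, kdot p =
        MoptE k₀ l (Efun lam (⇑e) (⇑ehat)) p /
          (eLpNorm (MoptE k₀ l (Efun lam (⇑e) (⇑ehat))) 2 ν01).toReal) ∧
      kdot ∈ feasSet k₀ l ∧
      (∀ k ∈ feasSet k₀ l,
        JobjE (Efun lam (⇑e) (⇑ehat)) kdot ≤ JobjE (Efun lam (⇑e) (⇑ehat)) k) ∧
      (∀ k ∈ feasSet k₀ l,
        (∀ k' ∈ feasSet k₀ l,
          JobjE (Efun lam (⇑e) (⇑ehat)) k ≤ JobjE (Efun lam (⇑e) (⇑ehat)) k') →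
        k = kdot) := by
  classical
  obtain ⟨k₁, hk₁sm, hk₁ae⟩ : ∃ k₁ : ℝ × ℝ → ℝ, StronglyMeasurable k₁ ∧ k₀ =ᵐ[ν01] k₁ :=
    ⟨hk₀L2.1.mk k₀, hk₀L2.1.stronglyMeasurable_mk, hk₀L2.1.ae_eq_mk⟩
  set Ef : ℝ × ℝ → ℝ := Efun lam (⇑e) (⇑ehat) with hEfdef
  set F : Set (ℝ × ℝ) := Fset k₁ l with hFdef
  have hF : MeasurableSet F := by
    have hFi : F = (Set.Icc (0:ℝ) 1 ×ˢ Set.Icc (0:ℝ) 1) ∩ {p | l ≤ k₁ p} := rfl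
    rw [hFi]
    exact (measurableSet_Icc.prod measurableSet_Icc).inter
      (measurableSet_le measurable_const hk₁sm.measurable)
  have hsec : ∀ y : ℝ, MeasurableSet (Fsec k₁ l y) := fun y =>
    hF.preimage (measurable_id.prodMk measurable_const)
  -- measurability and square-integrability of Ef
  have hesm := Lp.stronglyMeasurable e
  have hehatsm := Lp.stronglyMeasurable ehat
  have hEsm : StronglyMeasurable Ef := by
    rw [hEfdef]
    unfold Efun
    have h1 : Measurable fun p : ℝ × ℝ => (⇑ehat : ℝ → ℂ) p.1 :=
      hehatsm.measurable.comp measurable_fst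
    have h2 : Measurable fun p : ℝ × ℝ => (⇑e : ℝ → ℂ) p.2 :=
      hesm.measurable.comp measurable_snd
    exact (((((Complex.measurable_re.comp h1).mul (Complex.measurable_re.comp h2)).add
      ((Complex.measurable_im.comp h1).mul (Complex.measurable_im.comp h2))).mul
      measurable_const).add
      ((((Complex.measurable_im.comp h1).mul (Complex.measurable_re.comp h2)).sub
      ((Complex.measurable_re.comp h1).mul (Complex.measurable_im.comp h2))).mul
      measurable_const)).stronglyMeasurable
  have hre : ∀ f : Lp ℂ 2 μ01, MemLp (fun x => (f x).re) 2 μ01 := fun f =>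
    (Lp.memLp f).of_le
      ((Complex.measurable_re.comp (Lp.stronglyMeasurable f).measurable).aestronglyMeasurable)
      (Filter.Eventually.of_forall fun x => by
        simpa using Complex.abs_re_le_norm (f x))
  have him : ∀ f : Lp ℂ 2 μ01, MemLp (fun x => (f x).im) 2 μ01 := fun f =>
    (Lp.memLp f).of_le
      ((Complex.measurable_im.comp (Lp.stronglyMeasurable f).measurable).aestronglyMeasurable)
      (Filter.Eventually.of_forall fun x => by
        simpa using Complex.abs_im_le_norm (f x))
  have hEmem : MemLp Ef 2 ν01 := by
    have h1 := memLp_fst_mul_snd (hre ehat) (hre e)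
    have h2 := memLp_fst_mul_snd (him ehat) (him e)
    have h3 := memLp_fst_mul_snd (him ehat) (hre e)
    have h4 := memLp_fst_mul_snd (hre ehat) (him e)
    have hcomb := ((h1.add h2).const_smul lam.re).add ((h3.sub h4).const_smul lam.im)
    refine MemLp.ae_eq (Filter.Eventually.of_forall fun p => ?_) hcomb
    simp only [Pi.add_apply, Pi.sub_apply, Pi.smul_apply, smul_eq_mul, hEfdef, Efun]
    ring
  -- the mean function
  set c : ℝ → ℝ := fun y =>
    (∫ z in Fsec k₁ l y, Ef (z, y) ∂μ01) / (μ01 (Fsec k₁ l y)).toReal with hcdef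
  have hindicator_eq : ∀ y : ℝ, ∀ z : ℝ,
      (Fsec k₁ l y).indicator (fun z => Ef (z, y)) z = F.indicator Ef (z, y) := by
    intro y z
    by_cases hz : z ∈ Fsec k₁ l y
    · rw [Set.indicator_of_mem hz, Set.indicator_of_mem (show (z, y) ∈ F from hz)]
    · rw [Set.indicator_of_notMem hz, Set.indicator_of_notMem (show (z, y) ∉ F from hz)]
  have hnum_eq : ∀ y : ℝ, (∫ z in Fsec k₁ l y, Ef (z, y) ∂μ01)
      = ∫ z, F.indicator Ef (z, y) ∂μ01 := fun y => by
    rw [← integral_indicator (hsec y)]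
    exact integral_congr_ae (Filter.Eventually.of_forall fun z => hindicator_eq y z)
  have hnum_sm : StronglyMeasurable fun y => ∫ z in Fsec k₁ l y, Ef (z, y) ∂μ01 := by
    rw [show (fun y => ∫ z in Fsec k₁ l y, Ef (z, y) ∂μ01)
        = fun y => ∫ z, F.indicator Ef (z, y) ∂μ01 from funext hnum_eq]
    exact (hEsm.indicator hF).integral_prod_left'
  have hm_meas : Measurable fun y => μ01 (Fsec k₁ l y) :=
    measurable_measure_prodMk_right hF
  have hc_sm : StronglyMeasurable c :=
    (hnum_sm.measurable.div hm_meas.ennreal_toReal).stronglyMeasurable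
  set M₁ : ℝ × ℝ → ℝ := F.indicator (fun p => c p.2 - Ef p) with hM₁def
  -- a.e. identifications between the `k₀` and `k₁` objects
  have hFiff : ∀ᵐ p ∂ν01, (p ∈ Fset k₀ l ↔ p ∈ F) := by
    filter_upwards [hk₁ae] with p hp
    simp only [hFdef, Fset, Set.mem_setOf_eq, hp]
  have hsecae : ∀ᵐ y ∂μ01, Fsec k₀ l y =ᵐ[μ01] Fsec k₁ l y := by
    filter_upwards [ae_ae_symm01 hFiff] with y hy
    rw [Filter.eventuallyEq_set]
    filter_upwards [hy] with x hx
    exact hx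
  have hcae : ∀ᵐ y ∂μ01,
      (∫ z in Fsec k₀ l y, Ef (z, y) ∂μ01) / (μ01 (Fsec k₀ l y)).toReal = c y := by
    filter_upwards [hsecae] with y hy
    rw [setIntegral_congr_set hy, measure_congr hy, hcdef]
  have hMae : MoptE k₀ l Ef =ᵐ[ν01] M₁ := by
    filter_upwards [hFiff, ae_snd01 hcae] with p hp1 hp2
    unfold MoptE
    rw [hM₁def]
    by_cases hpF : p ∈ F
    · rw [Set.indicator_of_mem (hp1.mpr hpF), Set.indicator_of_mem hpF, hp2]
    · rw [Set.indicator_of_notMem (fun h => hpF (hp1.mp h)), Set.indicator_of_notMem hpF]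
  -- Memℒp of M₁
  have hmean : MemLp (F.indicator fun p => c p.2) 2 ν01 :=
    memLp_indicator_mean F hF hEsm hEmem c (fun y => rfl) hc_sm
  have hM₁mem : MemLp M₁ 2 ν01 := by
    have hsub := hmean.sub (hEmem.indicator hF)
    refine MemLp.ae_eq (Filter.Eventually.of_forall fun p => ?_) hsub
    simp only [Pi.sub_apply, hM₁def]
    by_cases hp : p ∈ F
    · rw [Set.indicator_of_mem hp, Set.indicator_of_mem hp, Set.indicator_of_mem hp]
    · rw [Set.indicator_of_notMem hp, Set.indicator_of_notMem hp,
        Set.indicator_of_notMem hp]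
      ring
  have heLp_eq : eLpNorm (MoptE k₀ l Ef) 2 ν01 = eLpNorm M₁ 2 ν01 := eLpNorm_congr_ae hMae
  set α : ℝ := (eLpNorm (MoptE k₀ l Ef) 2 ν01).toReal with hαdef
  -- integrability facts
  have hM₁int : Integrable M₁ ν01 := hM₁mem.integrable one_le_two
  have hEint : Integrable Ef ν01 := hEmem.integrable one_le_two
  have hM₁sec : ∀ᵐ y ∂μ01, Integrable (fun x => M₁ (x, y)) μ01 := hM₁int.prod_left_ae
  have hEsec : ∀ᵐ y ∂μ01, Integrable (fun x => Ef (x, y)) μ01 := hEint.prod_left_ae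
  have hM₁zero : ∀ᵐ y ∂μ01, ∫ x, M₁ (x, y) ∂μ01 = 0 := by
    filter_upwards [hEsec] with y hEy
    have hrw : ∫ x, M₁ (x, y) ∂μ01 = ∫ x in Fsec k₁ l y, (c y - Ef (x, y)) ∂μ01 := by
      rw [← integral_indicator (hsec y)]
      refine integral_congr_ae (Filter.Eventually.of_forall fun x => ?_)
      show M₁ (x, y) = (Fsec k₁ l y).indicator (fun x => c y - Ef (x, y)) x
      rw [hM₁def]
      by_cases hx : x ∈ Fsec k₁ l y
      · rw [Set.indicator_of_mem (show (x, y) ∈ F from hx), Set.indicator_of_mem hx]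
      · rw [Set.indicator_of_notMem (show (x, y) ∉ F from hx), Set.indicator_of_notMem hx]
    rw [hrw, integral_sub (integrableOn_const (C := c y) (measure_ne_top _ _) enorm_ne_top)
      hEy.integrableOn, setIntegral_const]
    by_cases h0 : μ01 (Fsec k₁ l y) = 0
    · have hz : ∫ x in Fsec k₁ l y, Ef (x, y) ∂μ01 = 0 := by
        rw [Measure.restrict_eq_zero.mpr h0]
        exact integral_zero_measure _
      rw [hz, hcdef]
      simp [hz, h0]
    · have hne : (μ01 (Fsec k₁ l y)).toReal ≠ 0 :=
        ENNReal.toReal_ne_zero.mpr ⟨h0, measure_ne_top _ _⟩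
      rw [hcdef, smul_eq_mul, measureReal_def]
      field_simp
      ring
  -- positivity of α
  have hαpos : 0 < α := by
    rw [hαdef, heLp_eq]
    refine ENNReal.toReal_pos ?_ hM₁mem.eLpNorm_ne_top
    intro h0
    have hM₁0 : ∀ᵐ p ∂ν01, M₁ p = 0 := by
      have := (eLpNorm_eq_zero_iff hM₁mem.1 two_ne_zero).mp h0
      filter_upwards [this] with p hp using hp
    have hΞμ : 0 < μ01 Ξ' := by
      have hsub : Ξ' ⊆ Set.Icc (0:ℝ) 1 := fun y hy => (hΞ'sub hy).1
      rw [μ01, Measure.restrict_apply' measurableSet_Icc,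
        Set.inter_eq_self_of_subset_left hsub]
      exact hΞ'pos
    have hfreq : ∃ᵐ y ∂μ01, y ∈ Ξ' := by
      intro hae
      rw [ae_iff] at hae
      simp only [not_not] at hae
      exact absurd hae (ne_of_gt hΞμ)
    obtain ⟨y, ⟨hyM, hysec⟩, hyΞ⟩ :=
      (((ae_ae_symm01 hM₁0).and hsecae).and_frequently hfreq).exists
    have hmy : 0 < μ01 (Fsec k₁ l y) := by
      have h := (hΞ'sub hyΞ).2
      rwa [measure_congr hysec] at h
    have hEc : ∀ᵐ x ∂(μ01.restrict (Fsec k₁ l y)), Ef (x, y) = c y := by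
      rw [ae_restrict_iff' (hsec y)]
      filter_upwards [hyM] with x hx hxs
      rw [hM₁def, Set.indicator_of_mem (show (x, y) ∈ F from hxs)] at hx
      linarith
    have h1 := hEpos y hyΞ
    have h2 := hEneg y hyΞ
    rw [setIntegral_congr_set hysec] at h1 h2
    rw [show (∫ x in Fsec k₁ l y, max (Ef (x, y)) 0 ∂μ01)
        = ∫ _x in Fsec k₁ l y, max (c y) 0 ∂μ01 from
      integral_congr_ae (by filter_upwards [hEc] with x hx; rw [hx]),
      setIntegral_const] at h1
    rw [show (∫ x in Fsec k₁ l y, max (-Ef (x, y)) 0 ∂μ01)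
        = ∫ _x in Fsec k₁ l y, max (-(c y)) 0 ∂μ01 from
      integral_congr_ae (by filter_upwards [hEc] with x hx; rw [hx]),
      setIntegral_const] at h2
    simp only [smul_eq_mul] at h1 h2
    have hmax1 : 0 < max (c y) 0 := by
      by_contra hcon
      push_neg at hcon
      nlinarith [(measureReal_nonneg : 0 ≤ μ01.real (Fsec k₁ l y))]
    have hmax2 : 0 < max (-(c y)) 0 := by
      by_contra hcon
      push_neg at hcon
      nlinarith [(measureReal_nonneg : 0 ≤ μ01.real (Fsec k₁ l y))]
    rcases lt_max_iff.mp hmax1 with hcpos | hcon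
    · rcases lt_max_iff.mp hmax2 with hcneg | hcon'
      · linarith
      · exact lt_irrefl _ hcon'
    · exact lt_irrefl _ hcon
  have hαne : α ≠ 0 := ne_of_gt hαpos
  -- the Lp element
  set Mlp : Lp ℝ 2 ν01 := hM₁mem.toLp M₁ with hMlpdef
  have hMlpcoe : ⇑Mlp =ᵐ[ν01] M₁ := MemLp.coeFn_toLp hM₁mem
  have hMlpnorm : ‖Mlp‖ = α := by
    rw [hMlpdef, Lp.norm_toLp, hαdef, heLp_eq]
  set kdot : Lp ℝ 2 ν01 := α⁻¹ • Mlp with hkdotdef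
  have hkdotcoe : ⇑kdot =ᵐ[ν01] fun p => α⁻¹ * M₁ p := by
    filter_upwards [Lp.coeFn_smul α⁻¹ Mlp, hMlpcoe] with p h1 h2
    show (α⁻¹ • Mlp : Lp ℝ 2 ν01) p = α⁻¹ * M₁ p
    rw [h1]
    simp [h2]
  have hrep : ∀ᵐ p ∂ν01, kdot p = MoptE k₀ l Ef p / α := by
    filter_upwards [hkdotcoe, hMae] with p h1 h2
    rw [h1, ← h2, div_eq_inv_mul]
  -- multiplication integrability helper
  have hmulint : ∀ (k : Lp ℝ 2 ν01) (g : ℝ × ℝ → ℝ) (hg : MemLp g 2 ν01),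
      Integrable (fun p => k p * g p) ν01 := by
    intro k g hg
    have h := L2.integrable_inner (𝕜 := ℝ) k (hg.toLp g)
    refine h.congr ?_
    filter_upwards [MemLp.coeFn_toLp hg] with p hp
    simp [RCLike.inner_apply, hp, mul_comm]
  have hinner : ∀ k : Lp ℝ 2 ν01, ⟪k, Mlp⟫ = ∫ p, k p * M₁ p ∂ν01 := by
    intro k
    rw [L2.inner_def]
    refine integral_congr_ae ?_
    filter_upwards [hMlpcoe] with p hp
    simp [RCLike.inner_apply, hp, mul_comm]
  -- the key formula for the objective on the feasible set
  have hJ : ∀ k : Lp ℝ 2 ν01, k ∈ feasSet k₀ l → JobjE Ef k = -⟪k, Mlp⟫ := by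
    intro k hk
    obtain ⟨hk0, hksupp, hknorm⟩ := hk
    have hksupp' : ∀ᵐ p ∂ν01, p ∉ F → k p = 0 := by
      filter_upwards [hksupp, hFiff] with p h1 h2 h3
      exact h1 fun hmem => h3 (h2.mp hmem)
    have hptwise : ∀ᵐ p ∂ν01, k p * Ef p = -(k p * M₁ p) + c p.2 * k p := by
      filter_upwards [hksupp'] with p hp
      rw [hM₁def]
      by_cases hpF : p ∈ F
      · rw [Set.indicator_of_mem hpF]; ring
      · rw [Set.indicator_of_notMem hpF, hp hpF]; ring
    have hkM : Integrable (fun p => k p * M₁ p) ν01 := hmulint k M₁ hM₁mem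
    have hkE : Integrable (fun p => k p * Ef p) ν01 := hmulint k Ef hEmem
    have hkint : Integrable (⇑k) ν01 := (Lp.memLp k).integrable one_le_two
    have hJint : ∀ᵐ y ∂μ01,
        (∫ x, k (x, y) * Ef (x, y) ∂μ01) = -∫ x, k (x, y) * M₁ (x, y) ∂μ01 := by
      filter_upwards [hkM.prod_left_ae, hkint.prod_left_ae, ae_ae_symm01 hptwise, hk0]
        with y h2 h3 h4 h5
      have hcongr : (∫ x, k (x, y) * Ef (x, y) ∂μ01)
          = ∫ x, (-(k (x, y) * M₁ (x, y)) + c y * k (x, y)) ∂μ01 :=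
        integral_congr_ae (by filter_upwards [h4] with x hx; rw [hx])
      have hneg : Integrable (fun x => -(k (x, y) * M₁ (x, y))) μ01 := h2.neg
      have hcm : Integrable (fun x => c y * k (x, y)) μ01 := h3.const_mul (c y)
      rw [hcongr, integral_add hneg hcm, integral_neg, integral_const_mul,
        h5, mul_zero, add_zero]
    have hJrfl : JobjE Ef k = ∫ y, (∫ x, k (x, y) * Ef (x, y) ∂μ01) ∂μ01 := rfl
    rw [hJrfl, integral_congr_ae hJint, integral_neg, hinner k]
    congr 1
    exact (MeasureTheory.integral_prod_symm (μ := μ01) (ν := μ01) _ hkM).symm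
  -- feasibility of kdot
  have hfeas : kdot ∈ feasSet k₀ l := by
    refine ⟨?_, ?_, ?_⟩
    · filter_upwards [ae_ae_symm01 hkdotcoe, hM₁zero, hM₁sec] with y h1 h2 h3
      rw [integral_congr_ae (by filter_upwards [h1] with x hx; rw [hx] :
        (fun x => kdot (x, y)) =ᵐ[μ01] fun x => α⁻¹ * M₁ (x, y)),
        integral_const_mul, h2, mul_zero]
    · filter_upwards [hrep] with p hp hnot
      rw [hp]
      unfold MoptE
      rw [Set.indicator_of_notMem hnot, zero_div]
    · rw [hkdotdef, norm_smul, hMlpnorm, Real.norm_eq_abs, abs_of_pos (inv_pos.mpr hαpos)]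
      exact inv_mul_cancel₀ hαne
  -- value at kdot
  have hJdot : JobjE Ef kdot = -α := by
    rw [hJ kdot hfeas, hkdotdef, real_inner_smul_left, real_inner_self_eq_norm_sq, hMlpnorm]
    field_simp
  refine ⟨hαpos, kdot, hrep, hfeas, ?_, ?_⟩
  · intro k hk
    rw [hJ k hk, hJdot]
    have h := real_inner_le_norm k Mlp
    rw [hk.2.2, hMlpnorm, one_mul] at h
    linarith
  · intro k hk hmin
    have h1 : JobjE Ef k ≤ -α := by
      have := hmin kdot hfeas
      rwa [hJdot] at this
    rw [hJ k hk] at h1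
    have h2 : α ≤ ⟪k, Mlp⟫ := by linarith
    have h3 : ⟪k, Mlp⟫ = ‖k‖ * ‖Mlp‖ := by
      refine le_antisymm (real_inner_le_norm _ _) ?_
      rw [hk.2.2, hMlpnorm, one_mul]
      exact h2
    have h4 := inner_eq_norm_mul_iff_real.mp h3
    rw [hk.2.2, hMlpnorm, one_smul] at h4
    rw [hkdotdef, ← h4, smul_smul, inv_mul_cancel₀ hαne, one_smul]
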